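/- Let the Loewner matrix L have entries L_{ij} = (g(Z_i)−g(σ_j))/(Z_i−σ_j), where g is a real function, the sample points Z_1,…,Z_N form a set closed under complex conjugation ordered in conjugate pairs, and the support points σ_1,…,σ_d form a set closed under conjugation ordered in conjugate pairs, with all Z_i distinct from all σ_j. Let 𝕋 be the block diagonal unitary matrix with block 1 for real Z_i and block T = (1/√2)[[1,1],[1/i,−1/i]] for each conjugate pair, and 𝕊 the block diagonal matrix with block 1 for real σ_j and block S = [[1,i],[1,−i]] for each conjugate pair. Then 𝕋·L·𝕊 is a real matrix. -/
import Mathlib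


open Matrix

/-- Realification of the Loewner matrix: with sample and support points closed under
conjugation (real points and conjugate pairs), the matrix `𝕋 · L · 𝕊` is real,
where `𝕋` has blocks `1` (real samples) and `T = (1/√2)[[1,1],[1/i,−1/i]]`
(conjugate pairs), and `𝕊` has blocks `1` (real supports) and `S = [[1,i],[1,−i]]`. -/
theorem loewner_realified {p q p' q' : ℕ} (g : ℂ → ℂ)
    (hg : ∀ z, g (star z) = star (g z))
    (Zr : Fin p → ℝ) (Zc : Fin q → ℂ) (hZc : ∀ j, (Zc j).im ≠ 0)
    (σr : Fin p' → ℝ) (σc : Fin q' → ℂ) (hσc : ∀ j, (σc j).im ≠ 0) :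
    let Z : (Fin p ⊕ Fin q × Fin 2) → ℂ :=
      Sum.elim (fun i => ((Zr i : ℝ) : ℂ))
        (fun x => if x.2 = 0 then Zc x.1 else star (Zc x.1))
    let σ : (Fin p' ⊕ Fin q' × Fin 2) → ℂ :=
      Sum.elim (fun i => ((σr i : ℝ) : ℂ))
        (fun x => if x.2 = 0 then σc x.1 else star (σc x.1))
    ∀ _hdist : ∀ i j, Z i ≠ σ j,
    let L : Matrix (Fin p ⊕ Fin q × Fin 2) (Fin p' ⊕ Fin q' × Fin 2) ℂ :=
      Matrix.of fun i j => (g (Z i) - g (σ j)) / (Z i - σ j)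
    let T : Matrix (Fin 2) (Fin 2) ℂ :=
      (1 / ((Real.sqrt 2 : ℝ) : ℂ)) • !![1, 1; 1 / Complex.I, -(1 / Complex.I)]
    let S : Matrix (Fin 2) (Fin 2) ℂ := !![1, Complex.I; 1, -Complex.I]
    let 𝕋 : Matrix (Fin p ⊕ Fin q × Fin 2) (Fin p ⊕ Fin q × Fin 2) ℂ :=
      Matrix.of fun i j =>
        match i, j with
        | Sum.inl i, Sum.inl j => if i = j then 1 else 0
        | Sum.inr x, Sum.inr y => if x.1 = y.1 then T x.2 y.2 else 0
        | _, _ => 0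
    let 𝕊 : Matrix (Fin p' ⊕ Fin q' × Fin 2) (Fin p' ⊕ Fin q' × Fin 2) ℂ :=
      Matrix.of fun i j =>
        match i, j with
        | Sum.inl i, Sum.inl j => if i = j then 1 else 0
        | Sum.inr x, Sum.inr y => if x.1 = y.1 then S x.2 y.2 else 0
        | _, _ => 0
    ∀ i j, ((𝕋 * L * 𝕊) i j).im = 0 := by
  intro Z σ _hdist L T S 𝕋 𝕊 i j
  set eZ : (Fin p ⊕ Fin q × Fin 2) ≃ (Fin p ⊕ Fin q × Fin 2) :=
    Equiv.sumCongr (Equiv.refl _) ((Equiv.refl _).prodCongr (Equiv.swap 0 1)) with heZ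
  set eσ : (Fin p' ⊕ Fin q' × Fin 2) ≃ (Fin p' ⊕ Fin q' × Fin 2) :=
    Equiv.sumCongr (Equiv.refl _) ((Equiv.refl _).prodCongr (Equiv.swap 0 1)) with heσ
  have hswap : ∀ t : Fin 2, (Equiv.swap (0 : Fin 2) 1) t = t + 1 := by decide
  have hZ : ∀ k, Z (eZ k) = star (Z k) := by
    rintro (k | ⟨x, t⟩)
    · simp [Z, heZ, Complex.conj_ofReal]
    · fin_cases t <;> simp [Z, heZ, hswap]
  have hσ : ∀ k, σ (eσ k) = star (σ k) := by
    rintro (k | ⟨x, t⟩)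
    · simp [σ, heσ, Complex.conj_ofReal]
    · fin_cases t <;> simp [σ, heσ, hswap]
  have hT : ∀ a b, 𝕋 a (eZ b) = star (𝕋 a b) := by
    rintro (a | ⟨x, s⟩) (b | ⟨y, t⟩) <;>
      simp only [𝕋, heZ, Matrix.of_apply, Equiv.sumCongr_apply, Sum.map_inl, Sum.map_inr,
        Equiv.coe_refl, id_eq, Equiv.prodCongr_apply, Prod.map]
    · split <;> simp
    · simp
    · simp
    · split
      · fin_cases s <;> fin_cases t <;>
          simp [T, hswap, Complex.ext_iff, Complex.div_re, Complex.div_im] <;> ring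
      · simp
  have hS : ∀ a b, 𝕊 (eσ a) b = star (𝕊 a b) := by
    rintro (a | ⟨x, s⟩) (b | ⟨y, t⟩) <;>
      simp only [𝕊, heσ, Matrix.of_apply, Equiv.sumCongr_apply, Sum.map_inl, Sum.map_inr,
        Equiv.coe_refl, id_eq, Equiv.prodCongr_apply, Prod.map]
    · split <;> simp
    · simp
    · simp
    · split
      · fin_cases s <;> fin_cases t <;>
          simp [S, hswap, Complex.ext_iff]
      · simp
  have hL : ∀ k l, L (eZ k) (eσ l) = star (L k l) := by
    intro k l
    simp only [L, Matrix.of_apply, hZ, hσ, hg, ← star_sub, ← star_div₀]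
  have expand : (𝕋 * L * 𝕊) i j = ∑ l, ∑ k, 𝕋 i k * L k l * 𝕊 l j := by
    simp only [Matrix.mul_apply, Finset.sum_mul]
  have key : star ((𝕋 * L * 𝕊) i j) = (𝕋 * L * 𝕊) i j := by
    rw [expand]
    calc star (∑ l, ∑ k, 𝕋 i k * L k l * 𝕊 l j)
        = ∑ l, ∑ k, 𝕋 i (eZ k) * L (eZ k) (eσ l) * 𝕊 (eσ l) j := by
          simp only [star_sum, star_mul', ← hT, ← hL, ← hS]
      _ = ∑ l, ∑ k, 𝕋 i k * L k l * 𝕊 l j := by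
          refine Fintype.sum_equiv eσ _ _ fun l => ?_
          exact Fintype.sum_equiv eZ _ _ fun k => rfl
  have him := congrArg Complex.im key
  simp only [Complex.star_def, Complex.conj_im] at him
  linarith
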